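/- arXiv:2001.08584 — 2 statements merged into one kernel-verified Lean document; each statement's English description precedes it below -/
import Mathlib

section
/- Let R be an integral domain which is an algebra over ℚ, and let D : R → R be a derivation (an additive map satisfying the Leibniz rule D(ab) = a·D(b) + b·D(a)). Let q ∈ R be a prime element, let s ≥ 1 be an integer, and let p, f ∈ R be elements neither of which is divisible by q. If q^s·p divides D(q^s·p)·f, then q divides D(q). -/
/-- Let `R` be an integral domain which is a `ℚ`-algebra, and let
`D : R → R` be a derivation (additive and satisfying the Leibniz rule).  Let `q ∈ R`
be a prime element, `s ≥ 1` an integer, and `p, f ∈ R` elements neither of which is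
divisible by `q`.  If `q ^ s * p` divides `D (q ^ s * p) * f`, then `q` divides `D q`. -/
theorem weyl_key_divisibility_step
    {R : Type*} [CommRing R] [IsDomain R] [Algebra ℚ R]
    (D : R → R)
    (hadd : ∀ a b : R, D (a + b) = D a + D b)
    (hleib : ∀ a b : R, D (a * b) = a * D b + b * D a)
    (q : R) (hq : Prime q)
    (s : ℕ) (hs : 1 ≤ s)
    (p f : R) (hp : ¬ q ∣ p) (hf : ¬ q ∣ f)
    (hdvd : q ^ s * p ∣ D (q ^ s * p) * f) :
    q ∣ D q := by
  -- power rule for D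
  have hpow : ∀ n : ℕ, D (q ^ (n + 1)) = ((n : R) + 1) * q ^ n * D q := by
    intro n
    induction n with
    | zero => simp
    | succ n ih =>
      have : q ^ (n + 2) = q * q ^ (n + 1) := by ring
      rw [this, hleib, ih]
      push_cast
      ring
  obtain ⟨t, rfl⟩ : ∃ t, s = t + 1 := ⟨s - 1, (Nat.succ_pred_eq_of_pos hs).symm⟩
  have hD : D (q ^ (t + 1) * p) = q ^ (t + 1) * D p + p * (((t : R) + 1) * q ^ t * D q) := by
    rw [hleib, hpow]
  rw [hD] at hdvd
  have h1 : q ^ (t + 1) ∣ (q ^ (t + 1) * D p + p * (((t : R) + 1) * q ^ t * D q)) * f :=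
    (dvd_mul_right _ p).trans hdvd
  have h2 : q ^ (t + 1) ∣ p * (((t : R) + 1) * q ^ t * D q) * f := by
    have h3 : q ^ (t + 1) ∣ q ^ (t + 1) * D p * f := ⟨D p * f, by ring⟩
    have := h1.sub h3
    simpa [add_mul, add_sub_cancel_left] using this
  have h4 : q * q ^ t ∣ (p * (((t : R) + 1) * D q) * f) * q ^ t := by
    rw [show q ^ (t + 1) = q * q ^ t from by ring] at h2
    convert h2 using 1
    ring
  have h5 : q ∣ p * (((t : R) + 1) * D q) * f :=
    (mul_dvd_mul_iff_right (pow_ne_zero t hq.ne_zero)).mp h4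
  -- (t+1 : R) is a unit since R is a ℚ-algebra
  have hunit : IsUnit ((t : R) + 1) := by
    have : ((t : R) + 1) = algebraMap ℚ R ((t : ℚ) + 1) := by push_cast; simp
    rw [this]
    exact (isUnit_iff_ne_zero.mpr (by positivity)).map (algebraMap ℚ R)
  rcases hq.dvd_mul.mp h5 with h | h
  · rcases hq.dvd_mul.mp h with h | h
    · exact absurd h hp
    · rcases hq.dvd_mul.mp h with h | h
      · exact absurd (isUnit_of_dvd_unit h hunit) hq.not_unit
      · exact h
  · exact absurd h hf
end

section
/- Let R be an integral domain, σ a type of variables, w : σ → ℕ a weight function, and δ, p two nonzero multivariate polynomials in R[xᵢ : i ∈ σ]. If δ divides p, then the weighted-homogeneous component of δ of top weighted degree (the leading weighted-homogeneous form of δ) divides the leading weighted-homogeneous form of p. -/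
open MvPolynomial

section Aux

variable {R σ : Type*} [CommRing R]

/-- The leading weighted-homogeneous component of a nonzero polynomial is nonzero. -/
lemma lead_wh_ne_zero (w : σ → ℕ) {φ : MvPolynomial σ R} (hφ : φ ≠ 0) :
    weightedHomogeneousComponent w (weightedTotalDegree w φ) φ ≠ 0 := by
  classical
  obtain ⟨d, hd, hdeg⟩ := Finset.exists_mem_eq_sup φ.support
    (MvPolynomial.support_nonempty.mpr hφ) (fun s => Finsupp.weight w s)
  intro h
  have := congrArg (coeff d) h
  rw [coeff_weightedHomogeneousComponent, weightedTotalDegree, if_pos hdeg.symm,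
    coeff_zero] at this
  exact (MvPolynomial.mem_support_iff.mp hd) this

/-- Every exponent in the support of `φ` minus its leading form has weight
strictly less than the top degree. -/
lemma weight_lt_of_mem_support_sub_lead (w : σ → ℕ) {φ : MvPolynomial σ R}
    {d : σ →₀ ℕ}
    (hd : d ∈ (φ - weightedHomogeneousComponent w (weightedTotalDegree w φ) φ).support) :
    Finsupp.weight w d < weightedTotalDegree w φ := by
  classical
  rw [MvPolynomial.mem_support_iff, coeff_sub, coeff_weightedHomogeneousComponent] at hd
  by_cases h : Finsupp.weight w d = weightedTotalDegree w φ
  · rw [if_pos h, sub_self] at hd; exact absurd rfl hd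
  · rw [if_neg h, sub_zero] at hd
    exact lt_of_le_of_ne (le_weightedTotalDegree w (MvPolynomial.mem_support_iff.mpr hd)) h

lemma weightedTotalDegree_mul_le (w : σ → ℕ) (φ ψ : MvPolynomial σ R) :
    weightedTotalDegree w (φ * ψ) ≤ weightedTotalDegree w φ + weightedTotalDegree w ψ := by
  classical
  apply Finset.sup_le
  intro d hd
  obtain ⟨a, ha, b, hb, rfl⟩ := Finset.mem_add.mp (MvPolynomial.support_mul φ ψ hd)
  rw [map_add]
  exact add_le_add (le_weightedTotalDegree w ha) (le_weightedTotalDegree w hb)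

/-- The component of a product at the sum of the top degrees is the product of the
leading components. -/
lemma wh_component_top_mul (w : σ → ℕ) (φ ψ : MvPolynomial σ R) :
    weightedHomogeneousComponent w (weightedTotalDegree w φ + weightedTotalDegree w ψ) (φ * ψ) =
      weightedHomogeneousComponent w (weightedTotalDegree w φ) φ *
        weightedHomogeneousComponent w (weightedTotalDegree w ψ) ψ := by
  classical
  set m := weightedTotalDegree w φ
  set n := weightedTotalDegree w ψ
  set Lφ := weightedHomogeneousComponent w m φ with hLφ
  set Lψ := weightedHomogeneousComponent w n ψ with hLψ
  have key : ∀ (a b : ℕ) (f g : MvPolynomial σ R),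
      (∀ d ∈ f.support, Finsupp.weight w d ≤ a) →
      (∀ d ∈ g.support, Finsupp.weight w d < b) →
      weightedHomogeneousComponent w (a + b) (f * g) = 0 := by
    intro a b f g hf hg
    apply weightedHomogeneousComponent_eq_zero'
    intro d hd
    obtain ⟨a, ha, b, hb, rfl⟩ := Finset.mem_add.mp (MvPolynomial.support_mul f g hd)
    rw [map_add]
    exact ne_of_lt (add_lt_add_of_le_of_lt (hf a ha) (hg b hb))
  have hsuppφ : ∀ d ∈ Lφ.support, Finsupp.weight w d = m := fun d hd =>
    (weightedHomogeneousComponent_isWeightedHomogeneous m φ) (MvPolynomial.mem_support_iff.mp hd)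
  have hsuppψ : ∀ d ∈ Lψ.support, Finsupp.weight w d = n := fun d hd =>
    (weightedHomogeneousComponent_isWeightedHomogeneous n ψ) (MvPolynomial.mem_support_iff.mp hd)
  have hφ' : ∀ d ∈ (φ - Lφ).support, Finsupp.weight w d < m :=
    fun d hd => weight_lt_of_mem_support_sub_lead w hd
  have hψ' : ∀ d ∈ (ψ - Lψ).support, Finsupp.weight w d < n :=
    fun d hd => weight_lt_of_mem_support_sub_lead w hd
  have hdecomp : φ * ψ = Lφ * Lψ + (Lφ * (ψ - Lψ) + ((φ - Lφ) * Lψ + (φ - Lφ) * (ψ - Lψ))) := by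
    ring
  have h1 : weightedHomogeneousComponent w (m + n) (Lφ * Lψ) = Lφ * Lψ :=
    IsWeightedHomogeneous.weightedHomogeneousComponent_same
      ((weightedHomogeneousComponent_isWeightedHomogeneous m φ).mul
        (weightedHomogeneousComponent_isWeightedHomogeneous n ψ))
  have h2 : weightedHomogeneousComponent w (m + n) (Lφ * (ψ - Lψ)) = 0 :=
    key _ _ _ _ (fun d hd => le_of_eq (hsuppφ d hd)) hψ'
  have h3 : weightedHomogeneousComponent w (m + n) ((φ - Lφ) * Lψ) = 0 := by
    rw [mul_comm, add_comm m n]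
    exact key _ _ _ _ (fun d hd => le_of_eq (hsuppψ d hd)) hφ'
  have h4 : weightedHomogeneousComponent w (m + n) ((φ - Lφ) * (ψ - Lψ)) = 0 :=
    key _ _ _ _ (fun d hd => le_of_lt (hφ' d hd)) hψ'
  rw [hdecomp, map_add, map_add, map_add, h1, h2, h3, h4]
  ring

end Aux

/-- Over an integral domain `R`, for a weight function `w : σ → ℕ`
and nonzero multivariate polynomials `δ, p`, if `δ` divides `p` then the leading
weighted-homogeneous form of `δ` divides the leading weighted-homogeneous form of `p`. -/
theorem leading_weighted_form_dvd_of_dvd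
    {R σ : Type*} [CommRing R] [IsDomain R]
    (w : σ → ℕ) (δ p : MvPolynomial σ R) (hδ : δ ≠ 0) (hp : p ≠ 0)
    (hdvd : δ ∣ p) :
    weightedHomogeneousComponent w (weightedTotalDegree w δ) δ ∣
      weightedHomogeneousComponent w (weightedTotalDegree w p) p := by
  obtain ⟨q, rfl⟩ := hdvd
  have hq : q ≠ 0 := fun h => hp (by rw [h, mul_zero])
  have hcomp := wh_component_top_mul w δ q
  have hne : weightedHomogeneousComponent w (weightedTotalDegree w δ) δ *
      weightedHomogeneousComponent w (weightedTotalDegree w q) q ≠ 0 :=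
    mul_ne_zero (lead_wh_ne_zero w hδ) (lead_wh_ne_zero w hq)
  have hdeg : weightedTotalDegree w (δ * q) =
      weightedTotalDegree w δ + weightedTotalDegree w q := by
    refine le_antisymm (weightedTotalDegree_mul_le w δ q) ?_
    by_contra h
    push_neg at h
    exact hne (hcomp ▸ weightedHomogeneousComponent_eq_zero _ (δ * q) h)
  rw [hdeg, hcomp]
  exact Dvd.intro _ rfl
end
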